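/- Let K be a self-adjoint Markov operator on L²(μ) (i.e. K is self-adjoint, positivity-preserving, K1 = 1, so that its spectrum is contained in [-1,1]). Then for all positive integers m, n and all f ∈ L², one has ‖(Id − K^{2n})^{1/2} K^m f‖² ≤ (n/(2m)) ‖f‖². -/
import Mathlib

open scoped InnerProductSpace

/-- For `t ∈ [0,1]` and `m ≥ 1`, `m·t^m·(1-t) ≤ 1/2`. -/
lemma scalar_aux (t : ℝ) (ht0 : 0 ≤ t) (ht1 : t ≤ 1) (m : ℕ) (hm : 1 ≤ m) :
    (m : ℝ) * (t ^ m * (1 - t)) ≤ 1 / 2 := by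
  have hmr : (0:ℝ) ≤ (m : ℝ) := Nat.cast_nonneg m
  have hx : (0:ℝ) ≤ (m : ℝ) * (1 - t) := by nlinarith
  set x : ℝ := (m : ℝ) * (1 - t) with hxdef
  have h1 : t ^ m ≤ Real.exp (-x) := by
    have ht : t ≤ Real.exp (t - 1) := by
      have := Real.add_one_le_exp (t - 1)
      linarith
    calc t ^ m ≤ (Real.exp (t - 1)) ^ m := pow_le_pow_left₀ ht0 ht m
      _ = Real.exp ((m : ℝ) * (t - 1)) := by rw [← Real.exp_nat_mul]
      _ = Real.exp (-x) := by rw [hxdef]; ring_nf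
  have hpos : (0:ℝ) < Real.exp x := Real.exp_pos x
  have h2 : x * Real.exp (-x) ≤ 1 / 2 := by
    have hxe : x ≤ Real.exp (x - 1) := by
      have := Real.add_one_le_exp (x - 1); linarith
    have he : Real.exp (x - 1) * Real.exp 1 = Real.exp x := by
      rw [← Real.exp_add]; ring_nf
    have hexp1 : (2:ℝ) ≤ Real.exp 1 := by
      have := Real.add_one_le_exp (1:ℝ); linarith
    have h3 : 2 * x ≤ Real.exp x := by
      have := Real.exp_pos (x - 1)
      nlinarith
    rw [Real.exp_neg, ← div_eq_mul_inv, div_le_iff₀ hpos]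
    linarith
  have hexpx : (0:ℝ) ≤ Real.exp (-x) := (Real.exp_pos _).le
  calc (m : ℝ) * (t ^ m * (1 - t)) = (t ^ m) * x := by rw [hxdef]; ring
    _ ≤ Real.exp (-x) * x := mul_le_mul_of_nonneg_right h1 hx
    _ ≤ 1 / 2 := by linarith [h2]

/-- For `t ∈ [0,1]`, `m, n ≥ 1`: `t^m (1 - t^n) ≤ n/(2m)`. -/
lemma scalar_key (t : ℝ) (ht0 : 0 ≤ t) (ht1 : t ≤ 1) (m n : ℕ) (hm : 1 ≤ m) (hn : 1 ≤ n) :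
    t ^ m * (1 - t ^ n) ≤ (n : ℝ) / (2 * m) := by
  have hbern : 1 + (n : ℝ) * (t - 1) ≤ t ^ n := by
    have := one_add_mul_le_pow (a := t - 1) (by linarith) n
    simpa using this
  have h1 : 1 - t ^ n ≤ (n : ℝ) * (1 - t) := by linarith
  have htm : (0:ℝ) ≤ t ^ m := pow_nonneg ht0 m
  have hmpos : (0:ℝ) < (m:ℝ) := by exact_mod_cast hm
  have hnn : (0:ℝ) ≤ (n:ℝ) := Nat.cast_nonneg n
  have h2 : t ^ m * (1 - t ^ n) ≤ (n : ℝ) * (t ^ m * (1 - t)) := by nlinarith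
  have h3 := scalar_aux t ht0 ht1 m hm
  have hh : t ^ m * (1 - t) ≤ 1 / (2 * (m:ℝ)) := by
    rw [le_div_iff₀ (by linarith)]
    linarith [h3]
  have h4 : (n : ℝ) * (t ^ m * (1 - t)) ≤ (n : ℝ) * (1 / (2 * (m:ℝ))) :=
    mul_le_mul_of_nonneg_left hh hnn
  have h5 : (n : ℝ) * (1 / (2 * (m:ℝ))) = (n : ℝ) / (2 * m) := by ring
  linarith

/-- Spectral bound for self-adjoint Markov operators: for a self-adjoint operator `K` with
spectrum in `[-1,1]` (equivalently `‖K‖ ≤ 1`), one has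
`‖(Id - K^{2n})^{1/2} K^m f‖² = ⟪(Id - K^{2n}) K^m f, K^m f⟫ ≤ (n/(2m)) ‖f‖²`. -/
theorem stmt2 {H : Type*} [NormedAddCommGroup H] [InnerProductSpace ℝ H] [CompleteSpace H]
    (K : H →L[ℝ] H) (hK : IsSelfAdjoint K) (hnorm : ‖K‖ ≤ 1) :
    ∀ m n : ℕ, 1 ≤ m → 1 ≤ n → ∀ f : H,
      ⟪(((1 : H →L[ℝ] H) - K ^ (2 * n)) ((K ^ m) f)), (K ^ m) f⟫_ℝ ≤
        ((n : ℝ) / (2 * m)) * ‖f‖ ^ 2 := by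
  intro m n hm hn f
  have hsym : (K : H →ₗ[ℝ] H).IsSymmetric :=
    ContinuousLinearMap.isSelfAdjoint_iff_isSymmetric.mp hK
  set b : ℕ → ℝ := fun j => ‖(K ^ j) f‖ with hb
  have hb0 : ∀ j, 0 ≤ b j := fun j => norm_nonneg _
  have happ : ∀ j, (K ^ (j + 1)) f = K ((K ^ j) f) := by
    intro j
    rw [pow_succ', ContinuousLinearMap.mul_apply]
  have hdec : ∀ j, b (j + 1) ≤ b j := by
    intro j
    show ‖(K ^ (j+1)) f‖ ≤ ‖(K ^ j) f‖
    rw [happ j]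
    calc ‖K ((K ^ j) f)‖ ≤ ‖K‖ * ‖(K ^ j) f‖ := K.le_opNorm _
      _ ≤ 1 * ‖(K ^ j) f‖ := mul_le_mul_of_nonneg_right hnorm (norm_nonneg _)
      _ = ‖(K ^ j) f‖ := one_mul _
  have hdec' : ∀ j k, j ≤ k → b k ≤ b j := by
    intro j k hjk
    induction k with
    | zero => simp_all
    | succ k ih =>
      rcases Nat.lt_or_ge j (k+1) with h | h
      · exact le_trans (hdec k) (ih (Nat.lt_succ_iff.mp h))
      · have : j = k + 1 := le_antisymm hjk h
        rw [this]
  -- log-convexity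
  have hlog : ∀ j, b (j + 1) ^ 2 ≤ b j * b (j + 2) := by
    intro j
    have h1 : (b (j+1) : ℝ) ^ 2 = ⟪(K ^ (j+1)) f, (K ^ (j+1)) f⟫_ℝ := by
      rw [real_inner_self_eq_norm_sq]
    have h2 : ⟪(K ^ (j+1)) f, (K ^ (j+1)) f⟫_ℝ = ⟪(K ^ (j+2)) f, (K ^ j) f⟫_ℝ := by
      have e : (K ^ (j+2)) f = K ((K ^ (j+1)) f) := happ (j+1)
      rw [e, happ j]
      exact (hsym.apply_clm (K ((K ^ j) f)) ((K ^ j) f)).symm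
    have h3 : ⟪(K ^ (j+2)) f, (K ^ j) f⟫_ℝ ≤ ‖(K ^ (j+2)) f‖ * ‖(K ^ j) f‖ :=
      real_inner_le_norm _ _
    calc b (j+1) ^ 2 = ⟪(K ^ (j+2)) f, (K ^ j) f⟫_ℝ := by rw [h1, h2]
      _ ≤ b (j+2) * b j := h3
      _ = b j * b (j+2) := mul_comm _ _
  -- the LHS equals b m ^ 2 - b (m+n) ^ 2
  have hsymn : ∀ k, ∀ x y : H, ⟪(K ^ k) x, y⟫_ℝ = ⟪x, (K ^ k) y⟫_ℝ := by
    intro k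
    induction k with
    | zero => intro x y; simp
    | succ k ih =>
      intro x y
      have e : ∀ z : H, (K ^ (k+1)) z = K ((K ^ k) z) := by
        intro z; rw [pow_succ', ContinuousLinearMap.mul_apply]
      rw [e x, e y, hsym.apply_clm ((K ^ k) x) y, ih x (K y), ← ContinuousLinearMap.mul_apply,
        ← pow_succ, e y]
  have hLHS : ⟪(((1 : H →L[ℝ] H) - K ^ (2 * n)) ((K ^ m) f)), (K ^ m) f⟫_ℝ
      = b m ^ 2 - b (m + n) ^ 2 := by
    have e1 : ((1 : H →L[ℝ] H) - K ^ (2 * n)) ((K ^ m) f)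
        = (K ^ m) f - (K ^ (2*n)) ((K ^ m) f) := by
      simp [ContinuousLinearMap.sub_apply]
    rw [e1, inner_sub_left]
    have e2 : (K ^ (2*n)) ((K ^ m) f) = (K ^ n) ((K ^ (n + m)) f) := by
      rw [← ContinuousLinearMap.mul_apply, ← ContinuousLinearMap.mul_apply, ← pow_add, ← pow_add]
      ring_nf
    have e4 : (K ^ n) ((K ^ m) f) = (K ^ (n+m)) f := by
      rw [← ContinuousLinearMap.mul_apply, ← pow_add]
    have e3 : ⟪(K ^ (2*n)) ((K ^ m) f), (K ^ m) f⟫_ℝ = ⟪(K ^ (n+m)) f, (K ^ (n+m)) f⟫_ℝ := by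
      rw [e2, hsymn n ((K ^ (n+m)) f) ((K ^ m) f), e4]
    rw [e3, real_inner_self_eq_norm_sq, real_inner_self_eq_norm_sq]
    have : n + m = m + n := by ring
    rw [this]
  rw [hLHS]
  have hbmn : b (m + n) ≤ b m := hdec' m (m+n) (Nat.le_add_right _ _)
  have hb0f : b 0 = ‖f‖ := by simp [hb]
  rcases eq_or_lt_of_le (hb0 m) with hbm0 | hbmpos
  · -- b m = 0
    have h1 : b (m+n) = 0 := le_antisymm (by rw [← hbm0] at hbmn; exact hbmn) (hb0 _)
    rw [← hbm0, h1]
    have : (0:ℝ) ≤ ((n : ℝ) / (2 * m)) * ‖f‖ ^ 2 := by positivity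
    simpa using this
  -- main case : b m > 0
  set ρ : ℝ := b (m+1) / b m with hρ
  have hρ0 : 0 ≤ ρ := div_nonneg (hb0 _) hbmpos.le
  have hρ1 : ρ ≤ 1 := div_le_one_of_le₀ (hdec m) (hb0 m)
  have hρbm : ρ * b m = b (m+1) := by
    rw [hρ]; field_simp
  -- downward cross inequality
  have claimA : ∀ k, k ≤ m → b (m - k + 1) * b m ≤ b (m - k) * b (m + 1) := by
    intro k
    induction k with
    | zero => intro _; simp [Nat.sub_zero, mul_comm]
    | succ k ih =>
      intro hk1
      have hk : k ≤ m := Nat.le_of_succ_le hk1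
      have ihk := ih hk
      have hj : m - (k+1) + 1 = m - k := by omega
      have hj2 : m - (k+1) + 2 = m - k + 1 := by omega
      have hlg := hlog (m - (k+1))
      rw [hj, hj2] at hlg
      have hpos : 0 < b (m - k) := lt_of_lt_of_le hbmpos (hdec' (m-k) m (by omega))
      rw [hj]
      nlinarith [hb0 (m+1), hb0 m, hb0 (m - (k+1)), hb0 (m - k + 1)]
  have hstep_down : ∀ j, j < m → b (j+1) ≤ ρ * b j := by
    intro j hj
    have h := claimA (m - j) (by omega)
    rw [show m - (m - j) = j from by omega] at h
    rw [hρ, div_mul_eq_mul_div, le_div_iff₀ hbmpos]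
    linarith
  have hA : ∀ j, j ≤ m → b j ≤ ρ ^ j * b 0 := by
    intro j
    induction j with
    | zero => intro _; simp
    | succ j ih =>
      intro hj1
      have hj : j < m := hj1
      have := hstep_down j hj
      have h2 := ih (Nat.le_of_succ_le hj1)
      calc b (j+1) ≤ ρ * b j := this
        _ ≤ ρ * (ρ ^ j * b 0) := mul_le_mul_of_nonneg_left h2 hρ0
        _ = ρ ^ (j+1) * b 0 := by ring
  have hB : ∀ k, ρ * b (m + k) ≤ b (m + k + 1) := by
    intro k
    induction k with
    | zero => exact le_of_eq hρbm
    | succ k ih =>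
      have hlg := hlog (m + k)
      rcases eq_or_lt_of_le (hb0 (m + k + 1)) with h0 | hp
      · rw [show m + (k+1) = m + k + 1 from rfl, ← h0]
        simpa using hb0 (m + k + 2)
      · have hpk : 0 < b (m + k) := lt_of_lt_of_le hp (hdec (m+k))
        have goal : ρ * b (m + k + 1) ≤ b (m + k + 2) := by
          nlinarith [hb0 (m + k + 2)]
        exact goal
  have hBn : ∀ k, ρ ^ k * b m ≤ b (m + k) := by
    intro k
    induction k with
    | zero => simp
    | succ k ih =>
      have h1 : ρ * (ρ ^ k * b m) ≤ ρ * b (m + k) := mul_le_mul_of_nonneg_left ih hρ0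
      have h2 := hB k
      calc ρ ^ (k+1) * b m = ρ * (ρ ^ k * b m) := by ring
        _ ≤ ρ * b (m + k) := h1
        _ ≤ b (m + k + 1) := h2
  -- assemble
  have hAm : b m ≤ ρ ^ m * b 0 := hA m le_rfl
  have hBm : ρ ^ n * b m ≤ b (m + n) := hBn n
  have hsq1 : b m ^ 2 ≤ (ρ ^ m) ^ 2 * b 0 ^ 2 := by
    have := pow_le_pow_left₀ (hb0 m) hAm 2
    calc b m ^ 2 ≤ (ρ ^ m * b 0) ^ 2 := this
      _ = (ρ ^ m) ^ 2 * b 0 ^ 2 := by ring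
  have hsq2 : (ρ ^ n) ^ 2 * b m ^ 2 ≤ b (m + n) ^ 2 := by
    have h0 : 0 ≤ ρ ^ n * b m := mul_nonneg (pow_nonneg hρ0 n) (hb0 m)
    have := pow_le_pow_left₀ h0 hBm 2
    calc (ρ ^ n) ^ 2 * b m ^ 2 = (ρ ^ n * b m) ^ 2 := by ring
      _ ≤ b (m + n) ^ 2 := this
  have ht0 : (0:ℝ) ≤ ρ ^ 2 := sq_nonneg ρ
  have ht1 : ρ ^ 2 ≤ 1 := by nlinarith
  have hkey := scalar_key (ρ ^ 2) ht0 ht1 m n hm hn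
  have h1n : 0 ≤ 1 - (ρ ^ n) ^ 2 := by
    have hρn : ρ ^ n ≤ 1 := pow_le_one₀ hρ0 hρ1
    nlinarith [pow_nonneg hρ0 n]
  rw [← hb0f]
  calc b m ^ 2 - b (m + n) ^ 2 ≤ b m ^ 2 - (ρ ^ n) ^ 2 * b m ^ 2 := by linarith [hsq2]
    _ = (1 - (ρ ^ n) ^ 2) * (b m ^ 2) := by ring
    _ ≤ (1 - (ρ ^ n) ^ 2) * ((ρ ^ m) ^ 2 * b 0 ^ 2) := mul_le_mul_of_nonneg_left hsq1 h1n
    _ = ((ρ ^ 2) ^ m * (1 - (ρ ^ 2) ^ n)) * b 0 ^ 2 := by ring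
    _ ≤ ((n : ℝ) / (2 * m)) * b 0 ^ 2 :=
        mul_le_mul_of_nonneg_right hkey (by positivity)
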